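/- Let S, T ⊆ {2, …, n} be subsets with ∑_{i ∈ S} w_i > 1 and ∑_{i ∈ T} w_i > 1, and suppose S ∩ T = ∅. Then the union E_S ∪ E_T is a flat of the graphic matroid M(w), and the subgraph of G(w) with edge set E_S ∪ E_T is disconnected (its vertex set splits into the two nonempty parts S and T with no edges of E_S ∪ E_T between them). -/

import Mathlib

open Finset

/-- The reduced weight graph `G(w)`: vertices are `{2, …, n}` (as natural numbers),
and distinct `i, j ∈ {2, …, n}` are adjacent iff `w i + w j > 1`. -/
def redGraph (n : ℕ) (w : ℕ → ℚ) : SimpleGraph ℕ where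
  Adj i j := i ≠ j ∧ (2 ≤ i ∧ i ≤ n) ∧ (2 ≤ j ∧ j ≤ n) ∧ 1 < w i + w j
  symm := by
    constructor
    intro i j h
    exact ⟨h.1.symm, h.2.2.1, h.2.1, by rw [add_comm]; exact h.2.2.2⟩
  loopless := by constructor; intro i h; exact h.1 rfl

/-- `E_S`: the set of edges of `G(w)` with both endpoints in `S`. -/
def edgesIn (n : ℕ) (w : ℕ → ℚ) (S : Set ℕ) : Set (Sym2 ℕ) :=
  {e ∈ (redGraph n w).edgeSet | ∀ v ∈ e, v ∈ S}

/-- A set `F` of edges of `G(w)` is a *flat* of the graphic matroid `M(w)` if for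
every edge `{u, v}` of `G(w)` not in `F`, the vertices `u` and `v` are not joined
by a walk using only edges of `F`. -/
def IsFlat (n : ℕ) (w : ℕ → ℚ) (F : Set (Sym2 ℕ)) : Prop :=
  F ⊆ (redGraph n w).edgeSet ∧
    ∀ u v : ℕ, (redGraph n w).Adj u v → s(u, v) ∉ F →
      ¬ (SimpleGraph.fromEdgeSet F).Reachable u v

/-- The set of endpoints of edges in `F`. -/
def edgeSupport (F : Set (Sym2 ℕ)) : Set ℕ := {v | ∃ e ∈ F, v ∈ e}

/-- A flat `F` is *1-connected* if the subgraph of `G(w)` with edge set `F` and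
vertex set the endpoints of edges of `F` is connected. -/
def OneConnected (F : Set (Sym2 ℕ)) : Prop :=
  ((SimpleGraph.fromEdgeSet F).induce (edgeSupport F)).Connected


lemma reach_closed {F : Set (Sym2 ℕ)} {S : Set ℕ}
    (hF : ∀ a b : ℕ, s(a, b) ∈ F → a ∈ S → b ∈ S) :
    ∀ {u v : ℕ}, (SimpleGraph.fromEdgeSet F).Reachable u v → u ∈ S → v ∈ S := by
  intro u v h hu
  obtain ⟨p⟩ := h
  induction p with
  | nil => exact hu
  | cons h p ih => exact ih (hF _ _ h.1 hu)

/-- If `S, T ⊆ {2, …, n}` are disjoint with `∑_{i ∈ S} w i > 1` and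
`∑_{i ∈ T} w i > 1`, then `E_S ∪ E_T` is a flat of `M(w)`, and the subgraph with
edge set `E_S ∪ E_T` is disconnected: its vertex set splits into the two nonempty
parts `S` and `T` with no edges of `E_S ∪ E_T` between them. -/
theorem union_edgesIn_flat_of_disjoint (n m : ℕ) (ε : ℚ) (hm : 2 ≤ m) (hmn : m < n) (hn : 4 ≤ n)
    (hε0 : 0 < ε) (hε1 : ε < 1 / ((n : ℚ) - m))
    (w : ℕ → ℚ) (hw : ∀ i, 1 ≤ i → i ≤ n → w i = if i ≤ m then 1 else ε)
    (S T : Finset ℕ) (hS : S ⊆ Finset.Icc 2 n) (hT : T ⊆ Finset.Icc 2 n)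
    (hsS : 1 < ∑ i ∈ S, w i) (hsT : 1 < ∑ i ∈ T, w i) (hdisj : S ∩ T = ∅) :
    IsFlat n w (edgesIn n w (↑S : Set ℕ) ∪ edgesIn n w (↑T : Set ℕ)) ∧
    (edgeSupport (edgesIn n w (↑S : Set ℕ) ∪ edgesIn n w (↑T : Set ℕ)) ⊆ ↑S ∪ ↑T) ∧
    S.Nonempty ∧ T.Nonempty ∧
    (∀ u ∈ S, ∀ v ∈ T,
      s(u, v) ∉ edgesIn n w (↑S : Set ℕ) ∪ edgesIn n w (↑T : Set ℕ)) := by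
  have hd : ∀ x : ℕ, x ∈ S → x ∈ T → False := by
    intro x hx hy
    have : x ∈ S ∩ T := Finset.mem_inter.mpr ⟨hx, hy⟩
    simp [hdisj] at this
  set F := edgesIn n w (↑S : Set ℕ) ∪ edgesIn n w (↑T : Set ℕ) with hF
  have hmemS : ∀ a b : ℕ, s(a, b) ∈ F → a ∈ (↑S : Set ℕ) → b ∈ (↑S : Set ℕ) := by
    rintro a b (h | h) ha
    · exact h.2 b (Sym2.mem_mk_right a b)
    · exact absurd (h.2 a (Sym2.mem_mk_left a b)) (fun hb => hd a ha hb)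
  have hmemT : ∀ a b : ℕ, s(a, b) ∈ F → a ∈ (↑T : Set ℕ) → b ∈ (↑T : Set ℕ) := by
    rintro a b (h | h) ha
    · exact absurd (h.2 a (Sym2.mem_mk_left a b)) (fun hb => hd a hb ha)
    · exact h.2 b (Sym2.mem_mk_right a b)
  refine ⟨⟨?_, ?_⟩, ?_, ?_, ?_, ?_⟩
  · rintro e (he | he) <;> exact he.1
  · intro u v hadj hnot hreach
    by_cases huS : u ∈ S
    · have hvS : v ∈ (↑S : Set ℕ) := reach_closed hmemS hreach huS
      exact hnot (Or.inl ⟨hadj, by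
        intro x hx
        rcases Sym2.mem_iff.mp hx with rfl | rfl
        · exact huS
        · exact hvS⟩)
    · by_cases huT : u ∈ T
      · have hvT : v ∈ (↑T : Set ℕ) := reach_closed hmemT hreach huT
        exact hnot (Or.inr ⟨hadj, by
          intro x hx
          rcases Sym2.mem_iff.mp hx with rfl | rfl
          · exact huT
          · exact hvT⟩)
      · have : v ∈ ({u} : Set ℕ) := by
          refine reach_closed (S := ({u} : Set ℕ)) ?_ hreach rfl
          rintro a b (h | h) (rfl : a = u)
          · exact absurd (h.2 a (Sym2.mem_mk_left a b)) huS
          · exact absurd (h.2 a (Sym2.mem_mk_left a b)) huT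
        exact hadj.1 this.symm
  · rintro v ⟨e, (he | he), hv⟩
    · exact Or.inl (he.2 v hv)
    · exact Or.inr (he.2 v hv)
  · rcases S.eq_empty_or_nonempty with rfl | h
    · simp at hsS; exact absurd hsS (by norm_num)
    · exact h
  · rcases T.eq_empty_or_nonempty with rfl | h
    · simp at hsT; exact absurd hsT (by norm_num)
    · exact h
  · rintro u hu v hv (h | h)
    · exact hd v (h.2 v (Sym2.mem_mk_right u v)) hv
    · exact hd u hu (h.2 u (Sym2.mem_mk_left u v))
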